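/- Let (x_n), (y_n) be nonincreasing sequences of positive reals tending to 0 with ∑ x_n = ∑ y_n = ∞ and lim y_n/x_n = ∞. Define v_{4n-3} = (-x_{2n-1}, -y_{2n-1}), v_{4n-2} = (-x_{2n-1}, y_{2n-1}), v_{4n-1} = (x_{2n}, y_{2n}), v_{4n} = (x_{2n}, -y_{2n}). Then the achievement set A(v_n) equals ℝ². -/

import Mathlib

open Filter Topology

/-- Euclidean norm on the plane `ℝ × ℝ`. -/
noncomputable def enorm2 (v : ℝ × ℝ) : ℝ := Real.sqrt (v.1 ^ 2 + v.2 ^ 2)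

/-- Euclidean inner product on the plane. -/
def dot2 (u v : ℝ × ℝ) : ℝ := u.1 * v.1 + u.2 * v.2

/-- `u` is a Levy vector of the series `∑ x n`: `u` is a unit vector and for every `ε > 0`
the sum of norms of the terms lying in the cone `S_ε(u)` diverges. -/
noncomputable def IsLevy (x : ℕ → ℝ × ℝ) (u : ℝ × ℝ) : Prop :=
  enorm2 u = 1 ∧ ∀ ε : ℝ, 0 < ε → ¬ Summable (fun n =>
    if (1 - ε) * enorm2 u * enorm2 (x n) ≤ dot2 u (x n) then enorm2 (x n) else 0)

/-- The series `∑ x n` converges (in the given order) to `s`. -/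
def ConvergesTo (x : ℕ → ℝ × ℝ) (s : ℝ × ℝ) : Prop :=
  Tendsto (fun N => ∑ n ∈ Finset.range N, x n) atTop (𝓝 s)

/-- The series `∑ x n` is conditionally convergent. -/
noncomputable def CondConv (x : ℕ → ℝ × ℝ) : Prop :=
  (∃ s, ConvergesTo x s) ∧ ¬ Summable (fun n => enorm2 (x n))

/-- `s` belongs to the achievement set `A(x)`. -/
def Achieves (x : ℕ → ℝ × ℝ) (s : ℝ × ℝ) : Prop :=
  ∃ E : Set ℕ, ConvergesTo (Set.indicator E x) s

/-- `s` belongs to the absolute achievement set `A_abs(x)`. -/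
noncomputable def AchievesAbs (x : ℕ → ℝ × ℝ) (s : ℝ × ℝ) : Prop :=
  ∃ E : Set ℕ, Summable (fun n => enorm2 (Set.indicator E x n)) ∧
    HasSum (Set.indicator E x) s

/-- The reduction property of a series `∑ (x n, y n)`. -/
noncomputable def ReductionProperty (x y : ℕ → ℝ) : Prop :=
  Tendsto (fun n => |y n| / |x n|) atTop atTop ∧
  ∀ ε : ℝ, 0 < ε → ∀ t ∈ Set.Ioo (-ε) ε, ∀ N : ℕ,
    ∃ m : ℕ, ∃ k : ℕ → ℕ, 0 < m ∧ StrictMono k ∧ N ≤ k 0 ∧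
      |(∑ i ∈ Finset.range m, x (k i)) - t| < ε / 2 ∧
      ∀ j : ℕ, 1 ≤ j → j ≤ m →
        |∑ i ∈ Finset.range j, x (k i)| < ε ∧ |∑ i ∈ Finset.range j, y (k i)| < ε

lemma sum_unbounded (t : ℕ → ℝ) (ht0 : ∀ n, 0 < t n) (htdiv : ¬ Summable t)
    (M : ℕ) (C : ℝ) : ∃ k, C < ∑ i ∈ Finset.range k, t (M + i) := by
  have hns : ¬ Summable (fun i => t (M + i)) := by
    intro h
    exact htdiv ((summable_nat_add_iff M).1 (by simpa [Nat.add_comm] using h))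
  have := (not_summable_iff_tendsto_nat_atTop_of_nonneg
    (fun i => (ht0 (M + i)).le)).1 hns
  obtain ⟨k, hk⟩ := (this.eventually_gt_atTop C).exists
  exact ⟨k, hk⟩

lemma steer1D (a t u : ℕ → ℝ)
    (ht0 : ∀ n, 0 < t n) (hu0 : ∀ n, 0 < u n)
    (htlim : Tendsto t atTop (𝓝 0)) (hulim : Tendsto u atTop (𝓝 0))
    (htdiv : ¬ Summable t) (hudiv : ¬ Summable u)
    (hrec : ∀ n, a (n + 1) = if 0 < a n then a n - t n else a n + u n) :
    Tendsto a atTop (𝓝 0) := by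
  rw [Metric.tendsto_atTop]
  intro ε hε
  obtain ⟨M1, hM1⟩ := (Metric.tendsto_atTop.1 htlim) ε hε
  obtain ⟨M2, hM2⟩ := (Metric.tendsto_atTop.1 hulim) ε hε
  set M := max M1 M2 with hMdef
  have hts : ∀ n, M ≤ n → t n < ε := by
    intro n hn
    have := hM1 n (le_trans (le_max_left _ _) hn)
    rwa [Real.dist_eq, sub_zero, abs_of_pos (ht0 n)] at this
  have hus : ∀ n, M ≤ n → u n < ε := by
    intro n hn
    have := hM2 n (le_trans (le_max_right _ _) hn)
    rwa [Real.dist_eq, sub_zero, abs_of_pos (hu0 n)] at this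
  have hstep2 : ∃ n, M ≤ n ∧ |a n| < ε := by
    by_contra hcon
    push_neg at hcon
    by_cases hpos : 0 < a M
    · have key : ∀ k, ε ≤ a (M + k) ∧
          a (M + k) = a M - ∑ i ∈ Finset.range k, t (M + i) := by
        intro k
        induction k with
        | zero =>
          refine ⟨?_, by simp⟩
          have := hcon M le_rfl
          rwa [abs_of_pos hpos] at this
        | succ k ih =>
          have hkpos : 0 < a (M + k) := lt_of_lt_of_le hε ih.1
          have heq : a (M + k + 1) = a (M + k) - t (M + k) := by
            rw [hrec (M + k), if_pos hkpos]
          have hgt : 0 < a (M + k + 1) := by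
            rw [heq]
            have := hts (M + k) (Nat.le_add_right _ _)
            linarith [ih.1]
          have habs := hcon (M + (k + 1)) (Nat.le_add_right _ _)
          rw [show M + (k + 1) = M + k + 1 from rfl] at *
          refine ⟨?_, ?_⟩
          · rwa [abs_of_pos hgt] at habs
          · rw [heq, ih.2, Finset.sum_range_succ]; ring
      obtain ⟨k, hk⟩ := sum_unbounded t ht0 htdiv M (a M - ε)
      have := (key k).1
      rw [(key k).2] at this
      linarith
    · have haM : a M ≤ -ε := by
        have h0 : a M ≤ 0 := le_of_not_gt hpos
        have := hcon M le_rfl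
        rw [abs_of_nonpos h0] at this
        linarith
      have key : ∀ k, a (M + k) ≤ -ε ∧
          a (M + k) = a M + ∑ i ∈ Finset.range k, u (M + i) := by
        intro k
        induction k with
        | zero => exact ⟨by simpa using haM, by simp⟩
        | succ k ih =>
          have hkneg : ¬ 0 < a (M + k) := by linarith [ih.1]
          have heq : a (M + k + 1) = a (M + k) + u (M + k) := by
            rw [hrec (M + k), if_neg hkneg]
          have hlt : a (M + k + 1) < 0 := by
            rw [heq]
            have := hus (M + k) (Nat.le_add_right _ _)
            linarith [ih.1]
          have habs := hcon (M + (k + 1)) (Nat.le_add_right _ _)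
          rw [show M + (k + 1) = M + k + 1 from rfl] at *
          refine ⟨?_, ?_⟩
          · rw [abs_of_nonpos hlt.le] at habs; linarith
          · rw [heq, ih.2, Finset.sum_range_succ]; ring
      obtain ⟨k, hk⟩ := sum_unbounded u hu0 hudiv M (-ε - a M)
      have h1 := (key k).1
      rw [(key k).2] at h1
      linarith
  obtain ⟨n0, hn0M, hn0⟩ := hstep2
  have hstay : ∀ m, n0 ≤ m → |a m| < ε := by
    intro m hm
    induction m, hm using Nat.le_induction with
    | base => exact hn0
    | succ m hm ih =>
      have hmM : M ≤ m := le_trans hn0M hm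
      rcases lt_or_ge 0 (a m) with hp | hp
      · have heq : a (m + 1) = a m - t m := by rw [hrec m, if_pos hp]
        rw [abs_lt] at ih ⊢
        have := hts m hmM
        constructor <;> rw [heq] <;> linarith [ht0 m]
      · have heq : a (m + 1) = a m + u m := by
          rw [hrec m, if_neg (not_lt.2 hp)]
        rw [abs_lt] at ih ⊢
        have := hus m hmM
        constructor <;> rw [heq] <;> linarith [hu0 m]
  exact ⟨n0, fun m hm => by rw [Real.dist_eq, sub_zero]; exact hstay m hm⟩

lemma div_odd_even (f : ℕ → ℝ)
    (hpos : ∀ n, 1 ≤ n → 0 < f n) (hmono : ∀ n, 1 ≤ n → f (n + 1) ≤ f n)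
    (hdiv : ¬ Summable f) :
    ¬ Summable (fun n => f (2 * n + 1)) ∧ ¬ Summable (fun n => f (2 * n + 2)) := by
  have key : Summable (fun n => f (2 * n + 2)) → Summable f := by
    intro he
    have ho3 : Summable (fun n => f (2 * n + 3)) :=
      he.of_nonneg_of_le (fun n => (hpos (2 * n + 3) (by omega)).le)
        (fun n => by simpa [show 2*n+2+1 = 2*n+3 from rfl] using hmono (2 * n + 2) (by omega))
    have ho : Summable (fun n => f (2 * n + 1)) := by
      exact (summable_nat_add_iff 1).1 (by
        simpa [show ∀ n:ℕ, 2 * (n + 1) + 1 = 2 * n + 3 by omega] using ho3)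
    have h1 : Summable (fun n => f (n + 1)) := by
      apply Summable.even_add_odd
      · simpa using ho
      · simpa [show ∀ n:ℕ, 2 * n + 1 + 1 = 2 * n + 2 by omega] using he
    exact (summable_nat_add_iff 1).1 h1
  have heven : ¬ Summable (fun n => f (2 * n + 2)) := fun h => hdiv (key h)
  refine ⟨?_, heven⟩
  intro ho
  apply heven
  exact ho.of_nonneg_of_le (fun n => (hpos (2 * n + 2) (by omega)).le)
    (fun n => by simpa [show 2*n+1+1 = 2*n+2 from rfl] using hmono (2 * n + 1) (by omega))

open Classical in
noncomputable def steerIdx (d : ℝ × ℝ) (n : ℕ) : ℕ :=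
  if 0 < d.1 then (if 0 < d.2 then 4*n+3 else 4*n+4)
  else (if 0 < d.2 then 4*n+2 else 4*n+1)

noncomputable def steerS (v : ℕ → ℝ × ℝ) (p : ℝ × ℝ) : ℕ → ℝ × ℝ
  | 0 => 0
  | n + 1 => steerS v p n + v (steerIdx (p - steerS v p n) n)

lemma steerS_succ (v : ℕ → ℝ × ℝ) (p : ℝ × ℝ) (n : ℕ) :
    steerS v p (n + 1) = steerS v p n + v (steerIdx (p - steerS v p n) n) := rfl

lemma steerIdx_bounds (d : ℝ × ℝ) (n : ℕ) :
    4*n+1 ≤ steerIdx d n ∧ steerIdx d n ≤ 4*n+4 := by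
  unfold steerIdx; split_ifs <;> omega

theorem stmt_13 (x y : ℕ → ℝ)
    (hxpos : ∀ n : ℕ, 1 ≤ n → 0 < x n) (hypos : ∀ n : ℕ, 1 ≤ n → 0 < y n)
    (hxmono : ∀ n : ℕ, 1 ≤ n → x (n + 1) ≤ x n)
    (hymono : ∀ n : ℕ, 1 ≤ n → y (n + 1) ≤ y n)
    (hxlim : Tendsto x atTop (𝓝 0)) (hylim : Tendsto y atTop (𝓝 0))
    (hxdiv : ¬ Summable x) (hydiv : ¬ Summable y)
    (hratio : Tendsto (fun n => |y n| / |x n|) atTop atTop)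
    (v : ℕ → ℝ × ℝ)
    (hv1 : ∀ n : ℕ, 1 ≤ n → v (4 * n - 3) = (-x (2 * n - 1), -y (2 * n - 1)))
    (hv2 : ∀ n : ℕ, 1 ≤ n → v (4 * n - 2) = (-x (2 * n - 1), y (2 * n - 1)))
    (hv3 : ∀ n : ℕ, 1 ≤ n → v (4 * n - 1) = (x (2 * n), y (2 * n)))
    (hv4 : ∀ n : ℕ, 1 ≤ n → v (4 * n) = (x (2 * n), -y (2 * n))) :
    ∀ p : ℝ × ℝ, Achieves v p := by
  classical
  intro p
  -- rewritten versions of the defining equalities for v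
  have hv1' : ∀ n : ℕ, v (4*n+1) = (-x (2*n+1), -y (2*n+1)) := fun n => by
    simpa [show 4*(n+1)-3 = 4*n+1 by omega, show 2*(n+1)-1 = 2*n+1 by omega]
      using hv1 (n+1) (by omega)
  have hv2' : ∀ n : ℕ, v (4*n+2) = (-x (2*n+1), y (2*n+1)) := fun n => by
    simpa [show 4*(n+1)-2 = 4*n+2 by omega, show 2*(n+1)-1 = 2*n+1 by omega]
      using hv2 (n+1) (by omega)
  have hv3' : ∀ n : ℕ, v (4*n+3) = (x (2*n+2), y (2*n+2)) := fun n => by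
    simpa [show 4*(n+1)-1 = 4*n+3 by omega, show 2*(n+1) = 2*n+2 by omega]
      using hv3 (n+1) (by omega)
  have hv4' : ∀ n : ℕ, v (4*n+4) = (x (2*n+2), -y (2*n+2)) := fun n => by
    simpa [show 4*(n+1) = 4*n+4 by omega, show 2*(n+1) = 2*n+2 by omega]
      using hv4 (n+1) (by omega)
  -- first-coordinate recurrence
  have hrec1 : ∀ n, (p - steerS v p (n+1)).1 =
      if 0 < (p - steerS v p n).1 then (p - steerS v p n).1 - x (2*n+2)
      else (p - steerS v p n).1 + x (2*n+1) := by
    intro n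
    rw [steerS_succ]
    unfold steerIdx
    split_ifs with h1 h2 h2 <;>
      simp [hv1', hv2', hv3', hv4', Prod.fst_sub, Prod.fst_add] <;> ring
  -- second-coordinate recurrence
  have hrec2 : ∀ n, (p - steerS v p (n+1)).2 =
      if 0 < (p - steerS v p n).2 then
        (p - steerS v p n).2 -
          (if 0 < (p - steerS v p n).1 then y (2*n+2) else y (2*n+1))
      else (p - steerS v p n).2 +
          (if 0 < (p - steerS v p n).1 then y (2*n+2) else y (2*n+1)) := by
    intro n
    rw [steerS_succ]
    unfold steerIdx
    split_ifs with h1 h2 h2 <;>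
      simp [hv1', hv2', hv3', hv4', Prod.snd_sub, Prod.snd_add] <;> ring
  -- divergence of odd/even subsequences
  obtain ⟨hxodd, hxeven⟩ := div_odd_even x hxpos hxmono hxdiv
  obtain ⟨hyodd, hyeven⟩ := div_odd_even y hypos hymono hydiv
  have h2n1 : Tendsto (fun n : ℕ => 2*n+1) atTop atTop := by
    apply tendsto_atTop_atTop_of_monotone
    · intro a b h; dsimp only; omega
    · intro b; exact ⟨b, by omega⟩
  have h2n2 : Tendsto (fun n : ℕ => 2*n+2) atTop atTop := by
    apply tendsto_atTop_atTop_of_monotone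
    · intro a b h; dsimp only; omega
    · intro b; exact ⟨b, by omega⟩
  have hxo_lim : Tendsto (fun n => x (2*n+1)) atTop (𝓝 0) := hxlim.comp h2n1
  have hxe_lim : Tendsto (fun n => x (2*n+2)) atTop (𝓝 0) := hxlim.comp h2n2
  have hyo_lim : Tendsto (fun n => y (2*n+1)) atTop (𝓝 0) := hylim.comp h2n1
  -- apply the 1D steering lemma to the first coordinate
  have ha : Tendsto (fun n => (p - steerS v p n).1) atTop (𝓝 0) := by
    apply steer1D _ (fun n => x (2*n+2)) (fun n => x (2*n+1))
      (fun n => hxpos _ (by omega)) (fun n => hxpos _ (by omega))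
      hxe_lim hxo_lim hxeven hxodd
    intro n
    exact hrec1 n
  -- the second coordinate, with a sign-dependent magnitude
  set Y : ℕ → ℝ := fun n => if 0 < (p - steerS v p n).1 then y (2*n+2) else y (2*n+1)
    with hYdef
  have hY0 : ∀ n, 0 < Y n := by
    intro n; rw [hYdef]; dsimp only
    split_ifs <;> exact hypos _ (by omega)
  have hYle : ∀ n, Y n ≤ y (2*n+1) := by
    intro n; rw [hYdef]; dsimp only
    split_ifs
    · simpa [show 2*n+1+1 = 2*n+2 from rfl] using hymono (2*n+1) (by omega)
    · exact le_rfl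
  have hYlim : Tendsto Y atTop (𝓝 0) :=
    squeeze_zero (fun n => (hY0 n).le) hYle hyo_lim
  have hYdiv : ¬ Summable Y := by
    intro h
    apply hyeven
    apply h.of_nonneg_of_le (fun n => (hypos (2*n+2) (by omega)).le)
    intro n
    rw [hYdef]; dsimp only
    split_ifs
    · exact le_rfl
    · simpa [show 2*n+1+1 = 2*n+2 from rfl] using hymono (2*n+1) (by omega)
  have hb : Tendsto (fun n => (p - steerS v p n).2) atTop (𝓝 0) := by
    apply steer1D _ Y Y hY0 hY0 hYlim hYlim hYdiv hYdiv
    intro n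
    exact hrec2 n
  -- convergence of the block sums to p
  have hd : Tendsto (fun n => p - steerS v p n) atTop (𝓝 (0 : ℝ × ℝ)) := by
    have := ha.prodMk_nhds hb
    exact this
  have hS : Tendsto (steerS v p) atTop (𝓝 p) := by
    have h : Tendsto (fun n : ℕ => p - (p - steerS v p n)) atTop (𝓝 (p - 0)) :=
      tendsto_const_nhds.sub hd
    rw [sub_zero] at h
    have he : (fun n : ℕ => p - (p - steerS v p n)) = steerS v p :=
      funext fun n => sub_sub_cancel p _
    rwa [he] at h
  -- the chosen index sequence
  set c : ℕ → ℕ := fun n => steerIdx (p - steerS v p n) n with hc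
  have hcmono : StrictMono c := by
    apply strictMono_nat_of_lt_succ
    intro n
    calc c n ≤ 4*n+4 := (steerIdx_bounds _ n).2
    _ < 4*(n+1)+1 := by omega
    _ ≤ c (n+1) := (steerIdx_bounds _ (n+1)).1
  set E : Set ℕ := Set.range c with hE
  -- the counting function m
  set m : ℕ → ℕ := fun N => Nat.rec 0 (fun N mN => if c mN = N then mN + 1 else mN) N
    with hmdef
  have hm_succ : ∀ N, m (N+1) = if c (m N) = N then m N + 1 else m N := fun N => rfl
  have hinv : ∀ N, (∑ n ∈ Finset.range N, Set.indicator E v n) = steerS v p (m N) ∧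
      (∀ j, j < m N → c j < N) ∧ N ≤ c (m N) := by
    intro N
    induction N with
    | zero =>
      refine ⟨by simp [hmdef, steerS], ?_, ?_⟩
      · intro j hj; simp [hmdef] at hj
      · omega
    | succ N ih =>
      obtain ⟨hP, hjlt, hle⟩ := ih
      rw [Finset.sum_range_succ, hP]
      by_cases hcm : c (m N) = N
      · have hNE : N ∈ E := ⟨m N, hcm⟩
        rw [Set.indicator_of_mem hNE, hm_succ, if_pos hcm]
        refine ⟨?_, ?_, ?_⟩
        · rw [steerS_succ]
          rw [show steerIdx (p - steerS v p (m N)) (m N) = c (m N) from rfl, hcm]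
        · intro j hj
          rcases Nat.lt_succ_iff_lt_or_eq.1 hj with h | h
          · exact Nat.lt_succ_of_lt (hjlt j h)
          · rw [h, hcm]; omega
        · have h2 : c (m N) < c (m N + 1) := hcmono (by omega)
          omega
      · have hNE : N ∉ E := by
          rintro ⟨j, hj⟩
          rcases lt_trichotomy j (m N) with h | h | h
          · have := hjlt j h; omega
          · exact hcm (h ▸ hj)
          · have := hcmono h; omega
        rw [Set.indicator_of_notMem hNE, add_zero, hm_succ, if_neg hcm]
        exact ⟨rfl, fun j hj => Nat.lt_succ_of_lt (hjlt j hj), by omega⟩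
  have hmmono : Monotone m := by
    apply monotone_nat_of_le_succ
    intro N
    rw [hm_succ]
    split_ifs <;> omega
  have hmtend : Tendsto m atTop atTop := by
    rw [tendsto_atTop_atTop]
    intro J
    refine ⟨c J + 1, fun N hN => ?_⟩
    by_contra h
    push_neg at h
    have h1 := hcmono (show m N < J by omega)
    have h2 := (hinv N).2.2
    omega
  refine ⟨E, ?_⟩
  have heq : (fun N => ∑ n ∈ Finset.range N, Set.indicator E v n) =
      fun N => steerS v p (m N) := funext fun N => (hinv N).1
  show Tendsto _ atTop (𝓝 p)
  rw [heq]
  exact hS.comp hmtend
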